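/- Let U be a P-point ultrafilter on ℕ. Then every infinitesimal in the ultrapower ℝ^ℕ/U is representable by a null sequence: for every u : ℕ → ℝ such that for every real ε > 0 the set {n | |u n| < ε} belongs to U, there exists v : ℕ → ℝ with v tending to 0 (Filter.Tendsto v atTop (nhds 0)) and {n | u n = v n} ∈ U. -/

import Mathlib

/-- A P-point: a free (nonprincipal) ultrafilter `U` on `ℕ` such that every
function `ℕ → ℕ` is constant or finite-to-one on some set of `U`. -/
def IsPPoint (U : Ultrafilter ℕ) : Prop :=
  (∀ k : ℕ, U ≠ pure k) ∧
    ∀ f : ℕ → ℕ, ∃ A ∈ U,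
      (∃ k : ℕ, ∀ n ∈ A, f n = k) ∨ ∀ k : ℕ, (A ∩ f ⁻¹' {k}).Finite

/-- If `U` is a P-point, then every infinitesimal of the ultrapower `ℝ^ℕ/U` is
representable by a sequence tending to zero. -/
theorem stmt_14 (U : Ultrafilter ℕ) (hU : IsPPoint U) (u : ℕ → ℝ)
    (hu : ∀ ε : ℝ, 0 < ε → {n : ℕ | |u n| < ε} ∈ U) :
    ∃ v : ℕ → ℝ, Filter.Tendsto v Filter.atTop (nhds 0) ∧ {n : ℕ | u n = v n} ∈ U := by
  classical
  set f : ℕ → ℕ := fun n => if u n = 0 then 0 else ⌈|u n|⁻¹⌉₊ with hf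
  obtain ⟨A, hA, hcase⟩ := hU.2 f
  rcases hcase with ⟨k, hk⟩ | hfin
  · -- constant case
    rcases Nat.eq_zero_or_pos k with hk0 | hkpos
    · -- u = 0 on A
      refine ⟨0, tendsto_const_nhds, ?_⟩
      refine U.sets_of_superset hA fun n hn => ?_
      have := hk n hn
      simp only [hf, hk0] at this
      by_contra h
      have hne : u n ≠ 0 := by simpa using h
      simp only [if_neg hne] at this
      have : (0:ℝ) < |u n|⁻¹ := by positivity
      have := Nat.ceil_pos.mpr this
      omega
    · -- contradiction: |u n| ≥ 1/k on A
      exfalso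
      have hk' : (0:ℝ) < (k:ℝ)⁻¹ := by positivity
      have hmem := U.inter_mem hA (hu _ hk')
      obtain ⟨n, hnA, hn⟩ := U.nonempty_of_mem hmem
      have hfn := hk n hnA
      have hne : u n ≠ 0 := by
        intro h
        simp [hf, h] at hfn
        omega
      simp only [hf, if_neg hne] at hfn
      have h1 : |u n|⁻¹ ≤ (k:ℝ) := by
        calc |u n|⁻¹ ≤ (⌈|u n|⁻¹⌉₊ : ℝ) := Nat.le_ceil _
        _ = (k:ℝ) := by exact_mod_cast hfn
      have hpos : (0:ℝ) < |u n| := abs_pos.mpr hne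
      have : (k:ℝ)⁻¹ ≤ |u n| := by
        rw [inv_le_comm₀ (by exact_mod_cast hkpos) hpos]
        exact h1
      exact absurd hn (not_lt.mpr this)
  · -- finite-to-one case
    refine ⟨fun n => if n ∈ A then u n else 0, ?_, ?_⟩
    · rw [← Nat.cofinite_eq_atTop, tendsto_nhds]
      intro s hs h0
      rw [Filter.mem_cofinite]
      obtain ⟨ε, hε, hball⟩ := Metric.mem_nhds_iff.mp (hs.mem_nhds h0)
      have hsub : ((fun n => if n ∈ A then u n else 0) ⁻¹' s)ᶜ ⊆
          ⋃ k ∈ Finset.range (⌈ε⁻¹⌉₊ + 1), A ∩ f ⁻¹' {k} := by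
        intro n hn
        simp only [Set.mem_compl_iff, Set.mem_preimage] at hn
        by_cases hnA : n ∈ A
        · simp only [if_pos hnA] at hn
          have hun : ε ≤ |u n| := by
            by_contra h
            exact hn (hball (by simpa [Real.dist_eq] using lt_of_not_ge h))
          have hne : u n ≠ 0 := by
            intro h; rw [h] at hun; simp at hun; linarith
          have hfle : f n ≤ ⌈ε⁻¹⌉₊ := by
            simp only [hf, if_neg hne]
            exact Nat.ceil_le_ceil (inv_anti₀ hε hun)
          simp only [Set.mem_iUnion, Finset.mem_range]
          exact ⟨f n, by omega, hnA, rfl⟩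
        · simp [if_neg hnA] at hn
          exact absurd (hball (by simpa using hε)) hn
      exact Set.Finite.subset (Set.Finite.biUnion (Finset.finite_toSet _) fun k _ => hfin k) hsub
    · exact U.sets_of_superset hA fun n hn => by simp [Set.mem_setOf_eq, if_pos hn, hn]
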